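/- arXiv:cond-mat/0605336 — 2 statements merged into one kernel-verified Lean document; each statement's English description precedes it below -/
import Mathlib

section
/- Let G=(V,E) be a finite simple graph, and define H(σ) = Σ_{(i,j)} J_{ij}σ_iσ_j - h Σ_i σ_i on configurations σ ∈ {0,1}^V, with J_{ij}=1 if (i,j)∉E and i≠j, J_{ij}=0 otherwise, and 0<h<1. If the support of σ is not a clique of G, then there exists a vertex i ∈ supp(σ) such that H(σ) > H(σ \ {i}), where σ \ {i} is σ with σ_i set to 0. -/
/-- If the support of a 0/1 configuration `σ` is not a clique of `G`, then there is a vertex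
`i` in the support such that removing it strictly decreases the Hamiltonian
`H(σ) = Σ_{(i,j)} J_{ij} σ_i σ_j - h Σ_i σ_i`, with `J_{ij} = 1` iff `i ≠ j` and `(i,j) ∉ E`,
and `0 < h < 1`. -/
theorem stmt_1 {V : Type*} [Fintype V] [DecidableEq V]
    (G : SimpleGraph V) [DecidableRel G.Adj]
    (h : ℝ) (hh0 : 0 < h) (hh1 : h < 1)
    (σ : V → ℝ) (hσ : ∀ i, σ i = 0 ∨ σ i = 1)
    (hnot : ¬ G.IsClique {i | σ i = 1}) :
    let H : (V → ℝ) → ℝ := fun τ =>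
      (∑ a, ∑ b, (if a ≠ b ∧ ¬ G.Adj a b then (1:ℝ) else 0) * τ a * τ b) / 2
        - h * ∑ a, τ a
    ∃ i, σ i = 1 ∧ H (Function.update σ i 0) < H σ := by
  intro H
  rw [SimpleGraph.isClique_iff, Set.Pairwise] at hnot
  push_neg at hnot
  obtain ⟨i, hi, j, hj, hij, hadj⟩ := hnot
  simp only [Set.mem_setOf_eq] at hi hj
  set J : V → V → ℝ := fun a b => if a ≠ b ∧ ¬ G.Adj a b then (1:ℝ) else 0 with hJ
  have Jsymm : ∀ a b, J a b = J b a := by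
    intro a b
    simp only [hJ, ne_comm, G.adj_comm]
  have Jdiag : ∀ a, J a a = 0 := by intro a; simp [hJ]
  refine ⟨i, hi, ?_⟩
  set τ := Function.update σ i 0 with hτ
  have hτi : τ i = 0 := Function.update_self i 0 σ
  have hτne : ∀ a, a ≠ i → τ a = σ a := fun a ha => Function.update_of_ne ha 0 σ
  have hsum : ∑ a, τ a = (∑ a, σ a) - 1 := by
    rw [← Finset.sum_erase_add _ τ (Finset.mem_univ i),
        ← Finset.sum_erase_add _ σ (Finset.mem_univ i), hτi, hi]
    rw [Finset.sum_congr rfl (fun a ha => hτne a (Finset.ne_of_mem_erase ha))]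
    ring
  have hdouble : ∑ a, ∑ b, J a b * σ a * σ b
      = (∑ a, ∑ b, J a b * τ a * τ b) + 2 * ∑ b, J i b * σ b := by
    have inner : ∀ a, a ≠ i → ∑ b, J a b * σ a * σ b
        = (∑ b, J a b * τ a * τ b) + J i a * σ a := by
      intro a ha
      have e1 : ∑ b ∈ Finset.univ.erase i, J a b * τ a * τ b
          = ∑ b ∈ Finset.univ.erase i, J a b * σ a * σ b :=
        Finset.sum_congr rfl fun b hb => by
          rw [hτne a ha, hτne b (Finset.ne_of_mem_erase hb)]
      rw [← Finset.sum_erase_add _ (fun b => J a b * σ a * σ b) (Finset.mem_univ i),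
          ← Finset.sum_erase_add _ (fun b => J a b * τ a * τ b) (Finset.mem_univ i),
          e1, hτi, hi, Jsymm a i]
      ring
    have h1 : ∑ b, J i b * τ i * τ b = 0 := by simp [hτi]
    have h2 : ∑ b, J i b * σ i * σ b = ∑ b, J i b * σ b := by
      rw [hi]; simp [mul_comm]
    have h3 : ∑ a ∈ Finset.univ.erase i, J i a * σ a = ∑ a, J i a * σ a := by
      rw [← Finset.sum_erase_add _ (fun a => J i a * σ a) (Finset.mem_univ i), Jdiag]
      ring
    rw [← Finset.sum_erase_add _ (fun a => ∑ b, J a b * σ a * σ b) (Finset.mem_univ i),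
        ← Finset.sum_erase_add _ (fun a => ∑ b, J a b * τ a * τ b) (Finset.mem_univ i),
        h1, h2, Finset.sum_congr rfl (fun a ha => inner a (Finset.ne_of_mem_erase ha)),
        Finset.sum_add_distrib, h3]
    ring
  have hge : (1:ℝ) ≤ ∑ b, J i b * σ b := by
    have hJij : J i j * σ j = 1 := by
      simp [hJ, hij, hadj, hj]
    calc (1:ℝ) = J i j * σ j := hJij.symm
      _ ≤ ∑ b, J i b * σ b := by
        apply Finset.single_le_sum (f := fun b => J i b * σ b) _ (Finset.mem_univ j)
        intro b _
        apply mul_nonneg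
        · simp only [hJ]; positivity
        · rcases hσ b with h' | h' <;> rw [h'] <;> norm_num
  have : H σ - H τ = (∑ b, J i b * σ b) - h := by
    show (∑ a, ∑ b, J a b * σ a * σ b) / 2 - h * ∑ a, σ a
        - ((∑ a, ∑ b, J a b * τ a * τ b) / 2 - h * ∑ a, τ a) = _
    rw [hsum, hdouble]
    ring
  linarith
end

section
/- Let G=(V,E) be a finite simple graph and 0<h<1. The Hamiltonian H(σ) = Σ_{(i,j)} J_{ij}σ_iσ_j - h Σ_i σ_i, with J_{ij}=1 iff i≠j and (i,j)∉E, attains its minimum over all configurations σ ∈ {0,1}^V exactly on configurations whose support is a maximum clique of G. -/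
set_option linter.unusedSectionVars false

section Aux
variable {V : Type*} [Fintype V] [DecidableEq V]
    (G : SimpleGraph V) [DecidableRel G.Adj]

/-- twice the number of non-edges inside T -/
noncomputable def NN (T : Finset V) : ℝ :=
  ∑ a ∈ T, ∑ b ∈ T, if a ≠ b ∧ ¬ G.Adj a b then (1:ℝ) else 0

lemma NN_nonneg (T : Finset V) : 0 ≤ NN G T := by
  apply Finset.sum_nonneg; intro a _; apply Finset.sum_nonneg; intro b _
  positivity

lemma NN_clique {T : Finset V} (hT : G.IsClique (T : Set V)) : NN G T = 0 := by
  apply Finset.sum_eq_zero; intro a ha; apply Finset.sum_eq_zero; intro b hb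
  by_cases hab : a = b
  · simp [hab]
  · simp [hT ha hb hab]

lemma NN_mono {S T : Finset V} (hST : S ⊆ T) : NN G S ≤ NN G T := by
  apply Finset.sum_le_sum_of_subset_of_nonneg hST ?_ |>.trans
  · apply Finset.sum_le_sum; intro a _
    apply Finset.sum_le_sum_of_subset_of_nonneg hST
    intro b _ _; positivity
  · intro a _ _; apply Finset.sum_nonneg; intro b _; positivity

lemma NN_erase {T : Finset V} {a b : V} (ha : a ∈ T) (hb : b ∈ T)
    (hab : a ≠ b) (hadj : ¬ G.Adj a b) : NN G (T.erase a) + 2 ≤ NN G T := by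
  classical
  set f : V → V → ℝ := fun x y => if x ≠ y ∧ ¬ G.Adj x y then (1:ℝ) else 0 with hf
  have hfnn : ∀ x y, 0 ≤ f x y := by intro x y; simp only [hf]; positivity
  have hsplit : NN G T = (∑ y ∈ T, f a y) + ∑ x ∈ T.erase a, ∑ y ∈ T, f x y := by
    rw [NN, ← Finset.add_sum_erase _ _ ha]
  have h1 : (1:ℝ) ≤ ∑ y ∈ T, f a y := by
    have := Finset.single_le_sum (f := fun y => f a y) (fun y _ => hfnn a y) hb
    simpa [hf, hab, hadj] using this
  have hb' : b ∈ T.erase a := Finset.mem_erase.2 ⟨hab.symm, hb⟩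
  have h2 : NN G (T.erase a) + 1 ≤ ∑ x ∈ T.erase a, ∑ y ∈ T, f x y := by
    have key : ∀ x ∈ T.erase a,
        (∑ y ∈ T.erase a, f x y) + (if x = b then 1 else 0) ≤ ∑ y ∈ T, f x y := by
      intro x hx
      rw [← Finset.add_sum_erase _ _ ha]
      have : (if x = b then (1:ℝ) else 0) ≤ f x a := by
        by_cases hxb : x = b
        · subst hxb
          have hba : ¬ G.Adj x a := fun h' => hadj h'.symm
          simp [hf, hab.symm, hba]
        · simp [hxb, hfnn]
      linarith [this]
    calc NN G (T.erase a) + 1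
        = ∑ x ∈ T.erase a, ((∑ y ∈ T.erase a, f x y) + (if x = b then 1 else 0)) := by
          rw [Finset.sum_add_distrib, Finset.sum_ite_eq' _ b (fun _ => (1:ℝ))]
          simp [NN, hb', hf]
      _ ≤ ∑ x ∈ T.erase a, ∑ y ∈ T, f x y := Finset.sum_le_sum key
  linarith [hsplit]

lemma not_clique_pair {T : Finset V} (hT : ¬ G.IsClique (T : Set V)) :
    ∃ a ∈ T, ∃ b ∈ T, a ≠ b ∧ ¬ G.Adj a b := by
  simp only [SimpleGraph.IsClique, Set.Pairwise] at hT
  push_neg at hT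
  obtain ⟨a, ha, b, hb, hab, hadj⟩ := hT
  exact ⟨a, ha, b, hb, hab, hadj⟩

/-- Key lower bound: if every clique has card ≤ C, then for every T,
    NN T / 2 - h * |T| ≥ -h * C. -/
lemma lower_bound (h : ℝ) (hh0 : 0 < h) (hh1 : h < 1) (C : ℝ)
    (hC : ∀ S : Finset V, G.IsClique (S : Set V) → (S.card : ℝ) ≤ C) :
    ∀ T : Finset V, -h * C ≤ NN G T / 2 - h * T.card := by
  intro T
  induction T using Finset.strongInduction with
  | _ T ih =>
    by_cases hT : G.IsClique (T : Set V)
    · rw [NN_clique G hT]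
      have := hC T hT
      nlinarith
    · obtain ⟨a, ha, b, hb, hab, hadj⟩ := not_clique_pair G hT
      have hss : T.erase a ⊂ T := Finset.erase_ssubset ha
      have hih := ih _ hss
      have hNN := NN_erase G ha hb hab hadj
      have hcard : ((T.erase a).card : ℝ) = (T.card : ℝ) - 1 := by
        rw [Finset.card_erase_of_mem ha]
        have : 1 ≤ T.card := Finset.card_pos.2 ⟨a, ha⟩
        push_cast [this]; ring
      rw [hcard] at hih
      linarith

end Aux

section Main
variable {V : Type*} [Fintype V] [DecidableEq V]
    (G : SimpleGraph V) [DecidableRel G.Adj]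

lemma sum_eq_card (τ : V → ℝ) (hτ : ∀ i, τ i = 0 ∨ τ i = 1) :
    ∑ a, τ a = ((Finset.univ.filter (fun i => τ i = 1)).card : ℝ) := by
  set T := Finset.univ.filter (fun i => τ i = 1) with hT
  have hzero : ∀ i, i ∉ T → τ i = 0 := by
    intro i hi; rcases hτ i with h | h
    · exact h
    · exact absurd (by simp [hT, h]) hi
  calc ∑ a, τ a = ∑ a ∈ T, τ a :=
        (Finset.sum_subset (Finset.subset_univ T) (fun x _ hx => hzero x hx)).symm
    _ = ∑ a ∈ T, 1 := Finset.sum_congr rfl (fun a ha => by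
        simp only [hT, Finset.mem_filter] at ha; exact ha.2)
    _ = (T.card : ℝ) := by simp

lemma dsum_eq (τ : V → ℝ) (hτ : ∀ i, τ i = 0 ∨ τ i = 1) :
    ∑ a, ∑ b, (if a ≠ b ∧ ¬ G.Adj a b then (1:ℝ) else 0) * τ a * τ b
      = NN G (Finset.univ.filter (fun i => τ i = 1)) := by
  set T := Finset.univ.filter (fun i => τ i = 1) with hT
  have hone : ∀ i ∈ T, τ i = 1 := by
    intro i hi; simp only [hT, Finset.mem_filter] at hi; exact hi.2
  have hzero : ∀ i, i ∉ T → τ i = 0 := by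
    intro i hi; rcases hτ i with h | h
    · exact h
    · exact absurd (by simp [hT, h]) hi
  calc ∑ a, ∑ b, (if a ≠ b ∧ ¬ G.Adj a b then (1:ℝ) else 0) * τ a * τ b
      = ∑ a ∈ T, ∑ b, (if a ≠ b ∧ ¬ G.Adj a b then (1:ℝ) else 0) * τ a * τ b := by
        refine (Finset.sum_subset (Finset.subset_univ T) ?_).symm
        intro a _ ha
        exact Finset.sum_eq_zero (fun b _ => by rw [hzero a ha]; ring)
    _ = ∑ a ∈ T, ∑ b ∈ T, (if a ≠ b ∧ ¬ G.Adj a b then (1:ℝ) else 0) * τ a * τ b := by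
        refine Finset.sum_congr rfl (fun a _ => ?_)
        refine (Finset.sum_subset (Finset.subset_univ T) ?_).symm
        intro b _ hb; rw [hzero b hb]; ring
    _ = NN G T := by
        refine Finset.sum_congr rfl (fun a ha => Finset.sum_congr rfl (fun b hb => ?_))
        rw [hone a ha, hone b hb]; ring

lemma filt_indicator (S : Finset V) :
    Finset.univ.filter (fun i => (if i ∈ S then (1:ℝ) else 0) = 1) = S := by
  ext i; by_cases h : i ∈ S <;> simp [h]

end Main

/-- For `0 < h < 1`, the Hamiltonian `H(σ) = Σ_{(i,j)} J_{ij} σ_i σ_j - h Σ_i σ_i`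
(with `J_{ij} = 1` iff `i ≠ j` and `(i,j) ∉ E`) attains its minimum over all 0/1
configurations exactly on configurations whose support is a maximum clique of `G`. -/
theorem stmt_2 {V : Type*} [Fintype V] [DecidableEq V]
    (G : SimpleGraph V) [DecidableRel G.Adj]
    (h : ℝ) (hh0 : 0 < h) (hh1 : h < 1)
    (σ : V → ℝ) (hσ : ∀ i, σ i = 0 ∨ σ i = 1) :
    let H : (V → ℝ) → ℝ := fun τ =>
      (∑ a, ∑ b, (if a ≠ b ∧ ¬ G.Adj a b then (1:ℝ) else 0) * τ a * τ b) / 2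
        - h * ∑ a, τ a
    ((∀ τ : V → ℝ, (∀ i, τ i = 0 ∨ τ i = 1) → H σ ≤ H τ) ↔
      (G.IsClique {i | σ i = 1} ∧
        ∀ S : Finset V, G.IsClique (S : Set V) → S.card ≤ {i | σ i = 1}.ncard)) := by
  intro H
  classical
  set T := Finset.univ.filter (fun i => σ i = 1) with hT
  have hScoe : {i | σ i = 1} = (↑T : Set V) := by ext i; simp [hT]
  have hncard : {i | σ i = 1}.ncard = T.card := by rw [hScoe, Set.ncard_coe_finset]
  have hHval : ∀ τ : V → ℝ, (∀ i, τ i = 0 ∨ τ i = 1) →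
      H τ = NN G (Finset.univ.filter (fun i => τ i = 1)) / 2
        - h * ((Finset.univ.filter (fun i => τ i = 1)).card : ℝ) := by
    intro τ hτ
    simp only [H]
    rw [dsum_eq G τ hτ, sum_eq_card τ hτ]
  have hHσ : H σ = NN G T / 2 - h * (T.card : ℝ) := hHval σ hσ
  -- indicator functions
  have hind01 : ∀ S : Finset V, ∀ i, (if i ∈ S then (1:ℝ) else 0) = 0 ∨
      (if i ∈ S then (1:ℝ) else 0) = 1 := by
    intro S i; by_cases hi : i ∈ S <;> simp [hi]
  have hHind : ∀ S : Finset V, H (fun i => if i ∈ S then (1:ℝ) else 0)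
      = NN G S / 2 - h * (S.card : ℝ) := by
    intro S
    rw [hHval _ (hind01 S), filt_indicator S]
  constructor
  · intro hmin
    have hclique : G.IsClique (↑T : Set V) := by
      by_contra hnc
      obtain ⟨a, ha, b, hb, hab, hadj⟩ := not_clique_pair G hnc
      have hle := hmin _ (hind01 (T.erase a))
      rw [hHind (T.erase a)] at hle
      have hNN := NN_erase G ha hb hab hadj
      have hcard : (((T.erase a)).card : ℝ) = (T.card : ℝ) - 1 := by
        rw [Finset.card_erase_of_mem ha]
        have : 1 ≤ T.card := Finset.card_pos.2 ⟨a, ha⟩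
        push_cast [this]; ring
      rw [hcard] at hle
      rw [hHσ] at hle
      linarith
    refine ⟨by rwa [hScoe], ?_⟩
    intro S hS
    have hle := hmin _ (hind01 S)
    rw [hHind S, NN_clique G hS, hHσ, NN_clique G hclique] at hle
    rw [hncard]
    have : h * (S.card : ℝ) ≤ h * (T.card : ℝ) := by linarith
    exact_mod_cast le_of_mul_le_mul_left this hh0
  · rintro ⟨hclique, hmax⟩ τ hτ
    rw [hScoe] at hclique
    rw [hHσ, NN_clique G hclique, hHval τ hτ]
    have hC : ∀ S : Finset V, G.IsClique (S : Set V) → (S.card : ℝ) ≤ (T.card : ℝ) := by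
      intro S hS
      have := hmax S hS
      rw [hncard] at this
      exact_mod_cast this
    have := lower_bound G h hh0 hh1 (T.card : ℝ) hC (Finset.univ.filter (fun i => τ i = 1))
    linarith
end
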